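/- If y : ℝ → ℝ is twice differentiable on (−1,1) and solves the Legendre differential equation of degree ν on (−1,1), then the function u(θ) = √(sin θ) · y(cos θ) is twice differentiable on (0,π) and satisfies u''(θ) + ϕ(θ)·u(θ) = 0 for all θ ∈ (0,π), where ϕ(θ) = 1/(4·sin²θ) + (ν + 1/2)². -/

import Mathlib

private noncomputable def udFn (y yd : ℝ → ℝ) : ℝ → ℝ := fun t =>
  Real.cos t / (2 * Real.sqrt (Real.sin t)) * y (Real.cos t)
    - Real.sqrt (Real.sin t) * Real.sin t * yd (Real.cos t)

private lemma cos_mem (θ : ℝ) (hθ : θ ∈ Set.Ioo 0 Real.pi) :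
    Real.cos θ ∈ Set.Ioo (-1 : ℝ) 1 := by
  have hs : 0 < Real.sin θ := Real.sin_pos_of_pos_of_lt_pi hθ.1 hθ.2
  have h := Real.sin_sq_add_cos_sq θ
  constructor <;> nlinarith

private lemma first_deriv (y yd : ℝ → ℝ)
    (hyd : ∀ x ∈ Set.Ioo (-1 : ℝ) 1, HasDerivAt y (yd x) x)
    (θ : ℝ) (hθ : θ ∈ Set.Ioo 0 Real.pi) :
    HasDerivAt (fun t => Real.sqrt (Real.sin t) * y (Real.cos t)) (udFn y yd θ) θ := by
  have hs : 0 < Real.sin θ := Real.sin_pos_of_pos_of_lt_pi hθ.1 hθ.2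
  have hsne : Real.sqrt (Real.sin θ) ≠ 0 := by positivity
  have hsqrt : HasDerivAt (fun t => Real.sqrt (Real.sin t))
      (1 / (2 * Real.sqrt (Real.sin θ)) * Real.cos θ) θ :=
    (Real.hasDerivAt_sqrt hs.ne').comp θ (Real.hasDerivAt_sin θ)
  have hy : HasDerivAt (fun t => y (Real.cos t)) (yd (Real.cos θ) * -Real.sin θ) θ :=
    (hyd _ (cos_mem θ hθ)).comp θ (Real.hasDerivAt_cos θ)
  have := hsqrt.mul hy
  convert this using 1
  · rfl
  · rfl
  · rfl
  have hsq : Real.sqrt (Real.sin θ) ^ 2 = Real.sin θ := Real.sq_sqrt hs.le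
  unfold udFn
  field_simp
  nlinarith [hsq]


/-- The Liouville transformation u(θ) = √(sin θ)·y(cos θ) of a solution of the Legendre
    equation is twice differentiable on (0,π) and satisfies u'' + ϕ u = 0 with
    ϕ(θ) = 1/(4 sin² θ) + (ν + 1/2)². -/
theorem stmt_10 (ν : ℝ) (y yd ydd : ℝ → ℝ)
    (hyd : ∀ x ∈ Set.Ioo (-1 : ℝ) 1, HasDerivAt y (yd x) x)
    (hydd : ∀ x ∈ Set.Ioo (-1 : ℝ) 1, HasDerivAt yd (ydd x) x)
    (hode : ∀ x ∈ Set.Ioo (-1 : ℝ) 1,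
      (1 - x ^ 2) * ydd x - 2 * x * yd x + ν * (ν + 1) * y x = 0) :
    ∀ θ ∈ Set.Ioo 0 Real.pi,
      HasDerivAt (fun t => Real.sqrt (Real.sin t) * y (Real.cos t))
        (deriv (fun t => Real.sqrt (Real.sin t) * y (Real.cos t)) θ) θ ∧
      HasDerivAt (deriv (fun t => Real.sqrt (Real.sin t) * y (Real.cos t)))
        (-((1 / (4 * Real.sin θ ^ 2) + (ν + 1 / 2) ^ 2)
            * (Real.sqrt (Real.sin θ) * y (Real.cos θ)))) θ := by
  intro θ hθ
  have hud := first_deriv y yd hyd θ hθ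
  have hderiv_eq : Set.EqOn (deriv (fun t => Real.sqrt (Real.sin t) * y (Real.cos t)))
      (udFn y yd) (Set.Ioo 0 Real.pi) := fun t ht => (first_deriv y yd hyd t ht).deriv
  have hmem : Set.Ioo (0:ℝ) Real.pi ∈ nhds θ := isOpen_Ioo.mem_nhds hθ
  have hEq : deriv (fun t => Real.sqrt (Real.sin t) * y (Real.cos t)) =ᶠ[nhds θ] udFn y yd :=
    Filter.eventuallyEq_of_mem hmem hderiv_eq
  refine ⟨hud.deriv ▸ hud, ?_⟩
  -- second derivative of udFn
  have hs : 0 < Real.sin θ := Real.sin_pos_of_pos_of_lt_pi hθ.1 hθ.2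
  have hsne : Real.sqrt (Real.sin θ) ≠ 0 := by positivity
  have hsq : Real.sqrt (Real.sin θ) ^ 2 = Real.sin θ := Real.sq_sqrt hs.le
  have hcm := cos_mem θ hθ
  have hsqrt : HasDerivAt (fun t => Real.sqrt (Real.sin t))
      (1 / (2 * Real.sqrt (Real.sin θ)) * Real.cos θ) θ :=
    (Real.hasDerivAt_sqrt hs.ne').comp θ (Real.hasDerivAt_sin θ)
  have hy : HasDerivAt (fun t => y (Real.cos t)) (yd (Real.cos θ) * -Real.sin θ) θ :=
    (hyd _ hcm).comp θ (Real.hasDerivAt_cos θ)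
  have hyd' : HasDerivAt (fun t => yd (Real.cos t)) (ydd (Real.cos θ) * -Real.sin θ) θ :=
    (hydd _ hcm).comp θ (Real.hasDerivAt_cos θ)
  have hden : HasDerivAt (fun t => 2 * Real.sqrt (Real.sin t))
      (2 * (1 / (2 * Real.sqrt (Real.sin θ)) * Real.cos θ)) θ := hsqrt.const_mul 2
  have hf1 : HasDerivAt (fun t => Real.cos t / (2 * Real.sqrt (Real.sin t)))
      ((-Real.sin θ * (2 * Real.sqrt (Real.sin θ)) -
        Real.cos θ * (2 * (1 / (2 * Real.sqrt (Real.sin θ)) * Real.cos θ))) /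
        (2 * Real.sqrt (Real.sin θ)) ^ 2) θ :=
    (Real.hasDerivAt_cos θ).div hden (by positivity)
  have hF1 := hf1.mul hy
  have hF2 := (hsqrt.mul (Real.hasDerivAt_sin θ)).mul hyd'
  have hudd := hF1.sub hF2
  have hud2 : HasDerivAt (udFn y yd)
      (-((1 / (4 * Real.sin θ ^ 2) + (ν + 1 / 2) ^ 2)
            * (Real.sqrt (Real.sin θ) * y (Real.cos θ)))) θ := by
    convert hudd using 1
    · rfl
    · rfl
    · rfl
    have hode' := hode _ hcm
    have hpyth : Real.sin θ ^ 2 + Real.cos θ ^ 2 = 1 := Real.sin_sq_add_cos_sq θ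
    have key : Real.sin θ ^ 2 * ydd (Real.cos θ)
        = 2 * Real.cos θ * yd (Real.cos θ) - ν * (ν + 1) * y (Real.cos θ) := by
      linear_combination hode' + ydd (Real.cos θ) * hpyth
    simp only [Pi.mul_apply]
    set q := Real.sqrt (Real.sin θ) with hqdef
    rw [← hsq] at key hpyth ⊢
    field_simp
    linear_combination (-16*q^4) * key + (4*y (Real.cos θ)) * hpyth
  exact hud2.congr_of_eventuallyEq hEq
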